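/- In the weak commutativity group χ(G), the subgroup R is generated by L₁₂ together with the elements [g⁻¹·g^φ, a, b^φ] for g, a, b ∈ G; that is, R equals the join of L₁₂ and the subgroup generated by {[g⁻¹·g^φ, a, b^φ] : g, a, b ∈ G} (equivalently, R/L₁₂ is generated by the images of these commutators). -/

import Mathlib

open Subgroup
open scoped commutatorElement

/-- The weak commutativity relations inside the free product `G ∗ G`. -/
def chiRel (G : Type*) [Group G] : Subgroup (Monoid.Coprod G G) :=
  Subgroup.normalClosure
    {x | ∃ g : G, x = Monoid.Coprod.inl g * Monoid.Coprod.inr g *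
      (Monoid.Coprod.inl g)⁻¹ * (Monoid.Coprod.inr g)⁻¹}

instance chiRel_normal (G : Type*) [Group G] : (chiRel G).Normal :=
  Subgroup.normalClosure_normal

/-- The weak commutativity group `χ(G)`. -/
def Chi (G : Type*) [Group G] : Type _ := Monoid.Coprod G G ⧸ chiRel G

instance (G : Type*) [Group G] : Group (Chi G) :=
  inferInstanceAs (Group (Monoid.Coprod G G ⧸ chiRel G))

/-- The canonical map `G → χ(G)`, `g ↦ g`. -/
def chiIota1 (G : Type*) [Group G] : G →* Chi G :=
  (QuotientGroup.mk' (chiRel G)).comp Monoid.Coprod.inl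

/-- The canonical map `G → χ(G)`, `g ↦ g^φ`. -/
def chiIota2 (G : Type*) [Group G] : G →* Chi G :=
  (QuotientGroup.mk' (chiRel G)).comp Monoid.Coprod.inr

/-- `G₁ ≤ χ(G)`. -/
def chiG1 (G : Type*) [Group G] : Subgroup (Chi G) := (chiIota1 G).range

/-- `G₂ = G^φ ≤ χ(G)`. -/
def chiG2 (G : Type*) [Group G] : Subgroup (Chi G) := (chiIota2 G).range

/-- `L = ⟨g⁻¹ g^φ : g ∈ G⟩`. -/
def chiL (G : Type*) [Group G] : Subgroup (Chi G) :=
  Subgroup.closure {x | ∃ g : G, x = (chiIota1 G g)⁻¹ * chiIota2 G g}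

/-- `D = ⁅G₁, G₂⁆`. -/
def chiD (G : Type*) [Group G] : Subgroup (Chi G) := ⁅chiG1 G, chiG2 G⁆

/-- `L₁ = ⁅L, G₁⁆`. -/
def chiL1 (G : Type*) [Group G] : Subgroup (Chi G) := ⁅chiL G, chiG1 G⁆

/-- `L₂ = ⁅L, G₂⁆`. -/
def chiL2 (G : Type*) [Group G] : Subgroup (Chi G) := ⁅chiL G, chiG2 G⁆

/-- `R = ⁅⁅G₁, L⁆, G₂⁆`. -/
def chiR (G : Type*) [Group G] : Subgroup (Chi G) := ⁅⁅chiG1 G, chiL G⁆, chiG2 G⁆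

/-- `L₁₂ = ⁅L₁, L₂⁆`. -/
def chiL12 (G : Type*) [Group G] : Subgroup (Chi G) := ⁅chiL1 G, chiL2 G⁆

namespace ChiProofAux

variable {G : Type*} [Group G]

/-! ### Pure commutator identities (valid in any group); mathlib convention
`⁅a, b⁆ = a * b * a⁻¹ * b⁻¹`. -/

section PureIdentities

variable {H : Type*} [Group H]

lemma expand2L (p q s : H) : ⁅p * q, s⁆ = p * ⁅q, s⁆ * p⁻¹ * ⁅p, s⁆ := by group

lemma expand2R (p r s : H) : ⁅p, r * s⁆ = ⁅p, r⁆ * (r * ⁅p, s⁆ * r⁻¹) := by group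

lemma c_mul (a b z : H) : ⁅a * b, z⁆ = ⁅a, ⁅b, z⁆⁆ * ⁅b, z⁆ * ⁅a, z⁆ := by group

lemma c_inv (w z : H) : ⁅w⁻¹, z⁆ = ⁅w⁻¹, ⁅w, z⁆⁻¹⁆ * ⁅w, z⁆⁻¹ := by group

lemma conj_mul (u a b : H) : u * (a * b) * u⁻¹ = (u * a * u⁻¹) * (u * b * u⁻¹) := by group

lemma conj_inv (u a : H) : u * a⁻¹ * u⁻¹ = (u * a * u⁻¹)⁻¹ := by group

lemma conjL (p q u : H) : u * ⁅p, q⁆ * u⁻¹ = ⁅u * p, q⁆ * ⁅u, q⁆⁻¹ := by group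

lemma conjR (p q u : H) : u * ⁅p, q⁆ * u⁻¹ = ⁅p, u⁆⁻¹ * ⁅p, u * q⁆ := by group

lemma conjC (u x y : H) : u * ⁅x, y⁆ * u⁻¹ = ⁅u * x * u⁻¹, u * y * u⁻¹⁆ := by group

lemma keyB_aux {a b P P' : H} (hab : a * b = b * a)
    (hA : a * P * a⁻¹ = b * P' * b⁻¹)
    (hA2 : a * (a * P * a⁻¹) * a⁻¹ = b * (b * P' * b⁻¹) * b⁻¹) : P = P' := by
  rw [← hA] at hA2
  set Q := a * P * a⁻¹ with hQdef
  -- hA2 : a * Q * a⁻¹ = b * Q * b⁻¹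
  have hcom : Commute a b := hab
  have e1 : Q = b⁻¹ * (a * Q * a⁻¹) * b := by rw [hA2]; group
  have h1 : a⁻¹ * b⁻¹ * a = b⁻¹ := by
    have h := hcom.inv_left.inv_right.eq
    rw [h]; group
  have h2 : a⁻¹ * b * a = b := by
    have h := hcom.inv_left.eq
    rw [h]; group
  calc P = a⁻¹ * Q * a := by rw [hQdef]; group
    _ = a⁻¹ * (b⁻¹ * (a * Q * a⁻¹) * b) * a := by rw [← e1]
    _ = (a⁻¹ * b⁻¹ * a) * Q * (a⁻¹ * b * a) := by group
    _ = b⁻¹ * Q * b := by rw [h1, h2]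
    _ = P' := by rw [hA]; group

lemma comm_aux {u v d : H} (h : u * d * u⁻¹ = v * d * v⁻¹) : Commute d (u⁻¹ * v) := by
  have key : (u⁻¹ * v) * d * (u⁻¹ * v)⁻¹ = d := by
    calc (u⁻¹ * v) * d * (u⁻¹ * v)⁻¹ = u⁻¹ * (v * d * v⁻¹) * u := by group
      _ = u⁻¹ * (u * d * u⁻¹) * u := by rw [h]
      _ = d := by group
  have h2 : (u⁻¹ * v) * d = d * (u⁻¹ * v) := by
    conv_rhs => rw [← key]
    group
  exact h2.symm

end PureIdentities

/-! ### Basic facts about `χ(G)` -/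

lemma rel (g : G) : Commute (chiIota1 G g) (chiIota2 G g) := by
  have h : (Monoid.Coprod.inl g * Monoid.Coprod.inr g * (Monoid.Coprod.inl g)⁻¹ *
      (Monoid.Coprod.inr g)⁻¹ : Monoid.Coprod G G) ∈ chiRel G :=
    Subgroup.subset_normalClosure ⟨g, rfl⟩
  rw [← QuotientGroup.ker_mk' (chiRel G), MonoidHom.mem_ker] at h
  rw [map_mul, map_mul, map_mul, map_inv, map_inv] at h
  have h3 : chiIota1 G g * chiIota2 G g * (chiIota1 G g)⁻¹ = chiIota2 G g := by
    rw [mul_inv_eq_one] at h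
    exact h
  rw [mul_inv_eq_iff_eq_mul] at h3
  exact h3

lemma rel1 (g : G) : ⁅chiIota1 G g, chiIota2 G g⁆ = 1 :=
  commutatorElement_eq_one_iff_commute.mpr (rel g)

lemma rel1' (g : G) : ⁅chiIota2 G g, chiIota1 G g⁆ = 1 :=
  commutatorElement_eq_one_iff_commute.mpr (rel g).symm

/-- The element `l_g = g⁻¹ g^φ`. -/
def lel (g : G) : Chi G := (chiIota1 G g)⁻¹ * chiIota2 G g

lemma lel_def (g : G) : lel g = (chiIota1 G g)⁻¹ * chiIota2 G g := rfl

lemma lel_mem (g : G) : lel g ∈ chiL G := subset_closure ⟨g, rfl⟩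

lemma i1_mem (a : G) : chiIota1 G a ∈ chiG1 G := ⟨a, rfl⟩

lemma i2_mem (b : G) : chiIota2 G b ∈ chiG2 G := ⟨b, rfl⟩

lemma iota2_eq (c : G) : chiIota2 G c = chiIota1 G c * lel c := by
  rw [lel_def]; group

lemma iota1_eq (c : G) : chiIota1 G c = chiIota2 G c * (lel c)⁻¹ := by
  rw [lel_def]; group

lemma mem_comm_iff {H₁ H₂ : Subgroup (Chi G)} {x : Chi G} :
    x ∈ ⁅H₁, H₂⁆ ↔ x ∈ closure {g : Chi G | ∃ g₁ ∈ H₁, ∃ g₂ ∈ H₂, ⁅g₁, g₂⁆ = g} := by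
  rw [Subgroup.commutator_def]

lemma chi_gen (x : Chi G) :
    x ∈ closure (Set.range ⇑(chiIota1 G) ∪ Set.range ⇑(chiIota2 G)) := by
  obtain ⟨q, rfl⟩ := QuotientGroup.mk'_surjective (chiRel G) x
  induction q using Monoid.Coprod.induction_on with
  | inl m => exact subset_closure (Or.inl ⟨m, rfl⟩)
  | inr n => exact subset_closure (Or.inr ⟨n, rfl⟩)
  | mul x y hx hy => rw [map_mul]; exact mul_mem hx hy

/-! ### Sidki's identities -/

lemma keyA (x y : G) :
    chiIota1 G x * ⁅chiIota1 G y, chiIota2 G x⁆ * (chiIota1 G x)⁻¹ =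
      chiIota2 G x * ⁅chiIota2 G y, chiIota1 G x⁆ * (chiIota2 G x)⁻¹ := by
  have h0 : ⁅chiIota1 G x * chiIota1 G y, chiIota2 G x * chiIota2 G y⁆ = 1 := by
    rw [← map_mul, ← map_mul]
    exact rel1 (x * y)
  have hE : ⁅chiIota1 G x * chiIota1 G y, chiIota2 G x * chiIota2 G y⁆ =
      (chiIota1 G x * ⁅chiIota1 G y, chiIota2 G x⁆ * (chiIota1 G x)⁻¹) *
        (chiIota2 G x * ⁅chiIota1 G x, chiIota2 G y⁆ * (chiIota2 G x)⁻¹) := by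
    rw [expand2L, expand2R, expand2R, rel1 x, rel1 y]
    group
  rw [hE] at h0
  rw [mul_eq_one_iff_eq_inv] at h0
  rw [h0]
  group

lemma stp (x y : G) : ⁅chiIota1 G x, chiIota2 G y⁆ = ⁅chiIota2 G x, chiIota1 G y⁆ := by
  have hA := keyA y x
  have hA2 := keyA y (y * x)
  rw [map_mul, map_mul, expand2L, expand2L, rel1 y, rel1' y, mul_one, mul_one] at hA2
  exact keyB_aux (rel y) hA hA2

lemma sidki_gen (g y x : G) :
    Commute ⁅chiIota1 G g, chiIota2 G y⁆ (lel x) := by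
  have h := stp (x * g) y
  rw [map_mul, map_mul, expand2L, expand2L, ← stp g y, ← stp x y] at h
  have h2 := mul_right_cancel h
  rw [lel_def]
  exact comm_aux h2

lemma comm_gen_L (d : Chi G) (hd : ∀ x : G, Commute d (lel x)) :
    ∀ w ∈ chiL G, Commute d w := by
  intro w hw
  have hw' : w ∈ closure {x : Chi G | ∃ g : G, x = (chiIota1 G g)⁻¹ * chiIota2 G g} := hw
  clear hw
  induction hw' using closure_induction with
  | mem s hs => obtain ⟨g, rfl⟩ := hs; exact hd g
  | one => exact Commute.one_right d
  | mul a b _ _ ha hb => exact ha.mul_right hb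
  | inv a _ ha => exact ha.inv_right

lemma comm_D_L : ∀ d ∈ chiD G, ∀ w ∈ chiL G, Commute d w := by
  intro d hd
  have hd' : d ∈ closure {g : Chi G | ∃ g₁ ∈ chiG1 G, ∃ g₂ ∈ chiG2 G, ⁅g₁, g₂⁆ = g} :=
    mem_comm_iff.mp hd
  clear hd
  induction hd' using closure_induction with
  | mem s hs =>
    obtain ⟨p, ⟨g, rfl⟩, q, ⟨y, rfl⟩, rfl⟩ := hs
    exact comm_gen_L _ (fun x => sidki_gen g y x)
  | one => exact fun w _ => Commute.one_left w
  | mul a b _ _ ha hb => exact fun w hw => (ha w hw).mul_left (hb w hw)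
  | inv a _ ha => exact fun w hw => (ha w hw).inv_left

lemma comm_DL_bot : ⁅chiD G, chiL G⁆ = ⊥ := by
  rw [eq_bot_iff, commutator_le]
  intro d hd w hw
  rw [mem_bot]
  exact commutatorElement_eq_one_iff_commute.mpr (comm_D_L d hd w hw)

/-! ### Normality -/

lemma conj_mem_of_gens (S : Set (Chi G)) (u : Chi G)
    (h : ∀ s ∈ S, u * s * u⁻¹ ∈ closure S) :
    ∀ w ∈ closure S, u * w * u⁻¹ ∈ closure S := by
  intro w hw
  induction hw using closure_induction with
  | mem s hs => exact h s hs
  | one => rw [mul_one, mul_inv_cancel]; exact one_mem _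
  | mul a b _ _ ha hb => rw [conj_mul]; exact mul_mem ha hb
  | inv a _ ha => rw [conj_inv]; exact inv_mem ha

lemma normal_of_conj {K : Type*} [Group K] (f : Chi G →* K) (hf : Function.Surjective f)
    (H : Subgroup K)
    (h1 : ∀ c : G, ∀ n ∈ H, f (chiIota1 G c) * n * (f (chiIota1 G c))⁻¹ ∈ H)
    (h2 : ∀ c : G, ∀ n ∈ H, f (chiIota2 G c) * n * (f (chiIota2 G c))⁻¹ ∈ H) :
    H.Normal := by
  have key : ∀ y : Chi G, f y ∈ normalizer (H : Set K) := by
    intro y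
    have hy := chi_gen y
    induction hy using closure_induction with
    | mem z hz =>
      rcases hz with ⟨c, rfl⟩ | ⟨c, rfl⟩
      · rw [mem_normalizer_iff]
        intro n
        constructor
        · exact h1 c n
        · intro hn
          have := h1 c⁻¹ _ hn
          rw [map_inv, map_inv] at this
          simpa [mul_assoc] using this
      · rw [mem_normalizer_iff]
        intro n
        constructor
        · exact h2 c n
        · intro hn
          have := h2 c⁻¹ _ hn
          rw [map_inv, map_inv] at this
          simpa [mul_assoc] using this
    | one => rw [map_one]; exact one_mem _
    | mul a b _ _ ha hb => rw [map_mul]; exact mul_mem ha hb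
    | inv a _ ha => rw [map_inv]; exact inv_mem ha
  rw [← normalizer_eq_top_iff, eq_top_iff]
  intro x _
  obtain ⟨y, rfl⟩ := hf x
  exact key y

lemma normal_of_conj_self (H : Subgroup (Chi G))
    (h1 : ∀ c : G, ∀ n ∈ H, chiIota1 G c * n * (chiIota1 G c)⁻¹ ∈ H)
    (h2 : ∀ c : G, ∀ n ∈ H, chiIota2 G c * n * (chiIota2 G c)⁻¹ ∈ H) : H.Normal :=
  normal_of_conj (MonoidHom.id _) Function.surjective_id H (by simpa using h1)
    (by simpa using h2)

lemma lel_conj (c g : G) :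
    chiIota1 G c * lel g * (chiIota1 G c)⁻¹ = lel (g * c⁻¹) * (lel c⁻¹)⁻¹ := by
  simp only [lel_def, map_mul, map_inv]
  group

lemma L_normal : (chiL G).Normal := by
  have h1 : ∀ c : G, ∀ n ∈ chiL G, chiIota1 G c * n * (chiIota1 G c)⁻¹ ∈ chiL G := by
    intro c n hn
    refine conj_mem_of_gens _ (chiIota1 G c) ?_ n hn
    rintro s ⟨g, rfl⟩
    rw [show (chiIota1 G g)⁻¹ * chiIota2 G g = lel g from rfl, lel_conj]
    exact mul_mem (lel_mem _) (inv_mem (lel_mem _))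
  apply normal_of_conj_self
  · exact h1
  · intro c n hn
    rw [iota2_eq]
    have heq : chiIota1 G c * lel c * n * (chiIota1 G c * lel c)⁻¹ =
        chiIota1 G c * (lel c * n * (lel c)⁻¹) * (chiIota1 G c)⁻¹ := by group
    rw [heq]
    exact h1 c _ (mul_mem (mul_mem (lel_mem c) hn) (inv_mem (lel_mem c)))

lemma D_normal : (chiD G).Normal := by
  apply normal_of_conj_self
  · intro c n hn
    have hn' := mem_comm_iff.mp (show n ∈ ⁅chiG1 G, chiG2 G⁆ from hn)
    refine mem_comm_iff.mpr (conj_mem_of_gens _ (chiIota1 G c) ?_ n hn')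
    rintro s ⟨p, hp, q, hq, rfl⟩
    rw [conjL]
    exact mul_mem (subset_closure ⟨_, mul_mem (i1_mem c) hp, _, hq, rfl⟩)
      (inv_mem (subset_closure ⟨_, i1_mem c, _, hq, rfl⟩))
  · intro c n hn
    have hn' := mem_comm_iff.mp (show n ∈ ⁅chiG1 G, chiG2 G⁆ from hn)
    refine mem_comm_iff.mpr (conj_mem_of_gens _ (chiIota2 G c) ?_ n hn')
    rintro s ⟨p, hp, q, hq, rfl⟩
    rw [conjR]
    exact mul_mem (inv_mem (subset_closure ⟨_, hp, _, i2_mem c, rfl⟩))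
      (subset_closure ⟨_, hp, _, mul_mem (i2_mem c) hq, rfl⟩)

lemma L1_normal : (chiL1 G).Normal := by
  have hL := L_normal (G := G)
  have hLconj : ∀ m ∈ chiL G, ∀ n ∈ chiL1 G, m * n * m⁻¹ ∈ chiL1 G := by
    intro m hm n hn
    have hn' := mem_comm_iff.mp (show n ∈ ⁅chiL G, chiG1 G⁆ from hn)
    refine mem_comm_iff.mpr (conj_mem_of_gens _ m ?_ n hn')
    rintro s ⟨w, hw, p, hp, rfl⟩
    rw [conjL]
    exact mul_mem (subset_closure ⟨_, mul_mem hm hw, _, hp, rfl⟩)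
      (inv_mem (subset_closure ⟨_, hm, _, hp, rfl⟩))
  have h1 : ∀ c : G, ∀ n ∈ chiL1 G, chiIota1 G c * n * (chiIota1 G c)⁻¹ ∈ chiL1 G := by
    intro c n hn
    have hn' := mem_comm_iff.mp (show n ∈ ⁅chiL G, chiG1 G⁆ from hn)
    refine mem_comm_iff.mpr (conj_mem_of_gens _ (chiIota1 G c) ?_ n hn')
    rintro s ⟨w, hw, p, hp, rfl⟩
    rw [conjC]
    exact subset_closure ⟨_, hL.conj_mem w hw _, _,
      mul_mem (mul_mem (i1_mem c) hp) (inv_mem (i1_mem c)), rfl⟩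
  apply normal_of_conj_self
  · exact h1
  · intro c n hn
    rw [iota2_eq]
    have heq : chiIota1 G c * lel c * n * (chiIota1 G c * lel c)⁻¹ =
        chiIota1 G c * (lel c * n * (lel c)⁻¹) * (chiIota1 G c)⁻¹ := by group
    rw [heq]
    exact h1 c _ (hLconj _ (lel_mem c) n hn)

lemma L2_normal : (chiL2 G).Normal := by
  have hL := L_normal (G := G)
  have hLconj : ∀ m ∈ chiL G, ∀ n ∈ chiL2 G, m * n * m⁻¹ ∈ chiL2 G := by
    intro m hm n hn
    have hn' := mem_comm_iff.mp (show n ∈ ⁅chiL G, chiG2 G⁆ from hn)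
    refine mem_comm_iff.mpr (conj_mem_of_gens _ m ?_ n hn')
    rintro s ⟨w, hw, p, hp, rfl⟩
    rw [conjL]
    exact mul_mem (subset_closure ⟨_, mul_mem hm hw, _, hp, rfl⟩)
      (inv_mem (subset_closure ⟨_, hm, _, hp, rfl⟩))
  have h2 : ∀ c : G, ∀ n ∈ chiL2 G, chiIota2 G c * n * (chiIota2 G c)⁻¹ ∈ chiL2 G := by
    intro c n hn
    have hn' := mem_comm_iff.mp (show n ∈ ⁅chiL G, chiG2 G⁆ from hn)
    refine mem_comm_iff.mpr (conj_mem_of_gens _ (chiIota2 G c) ?_ n hn')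
    rintro s ⟨w, hw, p, hp, rfl⟩
    rw [conjC]
    exact subset_closure ⟨_, hL.conj_mem w hw _, _,
      mul_mem (mul_mem (i2_mem c) hp) (inv_mem (i2_mem c)), rfl⟩
  apply normal_of_conj_self
  · intro c n hn
    rw [iota1_eq]
    have heq : chiIota2 G c * (lel c)⁻¹ * n * (chiIota2 G c * (lel c)⁻¹)⁻¹ =
        chiIota2 G c * ((lel c)⁻¹ * n * ((lel c)⁻¹)⁻¹) * (chiIota2 G c)⁻¹ := by group
    rw [heq]
    exact h2 c _ (hLconj _ (inv_mem (lel_mem c)) n hn)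
  · exact h2

lemma L12_normal : (chiL12 G).Normal := by
  haveI := L1_normal (G := G)
  haveI := L2_normal (G := G)
  exact Subgroup.commutator_normal (chiL1 G) (chiL2 G)

/-! ### `R ≤ D` and consequences -/

lemma R_le_D : chiR G ≤ chiD G := by
  haveI := D_normal (G := G)
  set π := QuotientGroup.mk' (chiD G) with hπ
  have hπs : Function.Surjective π := QuotientGroup.mk'_surjective _
  have hDbot : map π (chiD G) = ⊥ := by
    rw [Subgroup.map_eq_bot_iff, hπ, QuotientGroup.ker_mk']
  haveI hG1n : (map π (chiG1 G)).Normal := by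
    apply normal_of_conj π hπs
    · intro c n hn
      rw [mem_map] at hn
      obtain ⟨m, hm, rfl⟩ := hn
      obtain ⟨a, rfl⟩ := hm
      rw [mem_map]
      refine ⟨chiIota1 G c * chiIota1 G a * (chiIota1 G c)⁻¹,
        mul_mem (mul_mem (i1_mem c) (i1_mem a)) (inv_mem (i1_mem c)), ?_⟩
      rw [map_mul, map_mul, map_inv]
    · intro c n hn
      rw [mem_map] at hn
      obtain ⟨m, hm, rfl⟩ := hn
      obtain ⟨a, rfl⟩ := hm
      have key : chiIota2 G c * chiIota1 G a * (chiIota2 G c)⁻¹ =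
          chiIota1 G a * ⁅chiIota1 G a⁻¹, chiIota2 G c⁆ := by
        rw [map_inv]; group
      have hker : π ⁅chiIota1 G a⁻¹, chiIota2 G c⁆ = 1 := by
        rw [← MonoidHom.mem_ker, hπ, QuotientGroup.ker_mk']
        exact commutator_mem_commutator (i1_mem a⁻¹) (i2_mem c)
      rw [mem_map]
      refine ⟨chiIota1 G a, i1_mem a, ?_⟩
      rw [← map_inv, ← map_mul, ← map_mul, key, map_mul, hker, mul_one]
  have hle : ⁅map π (chiG1 G), map π (chiL G)⁆ ≤ map π (chiG1 G) :=
    commutator_le_left _ _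
  have hbot : map π (chiR G) = ⊥ := by
    rw [show chiR G = ⁅⁅chiG1 G, chiL G⁆, chiG2 G⁆ from rfl, map_commutator, map_commutator, eq_bot_iff]
    calc ⁅⁅map π (chiG1 G), map π (chiL G)⁆, map π (chiG2 G)⁆
        ≤ ⁅map π (chiG1 G), map π (chiG2 G)⁆ := commutator_mono hle le_rfl
      _ = map π (chiD G) := (map_commutator _ _ _).symm
      _ = ⊥ := hDbot
      _ ≤ ⊥ := le_rfl
  rw [Subgroup.map_eq_bot_iff, hπ, QuotientGroup.ker_mk'] at hbot
  exact hbot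

lemma comm_R_L : ∀ r ∈ chiR G, ∀ w ∈ chiL G, Commute r w :=
  fun r hr => comm_D_L r (R_le_D hr)

lemma comm_RL_bot : ⁅chiR G, chiL G⁆ = ⊥ := by
  rw [eq_bot_iff, commutator_le]
  intro r hr w hw
  rw [mem_bot]
  exact commutatorElement_eq_one_iff_commute.mpr (comm_R_L r hr w hw)

lemma R_eq : chiR G = ⁅chiL1 G, chiG2 G⁆ := by
  rw [show chiR G = ⁅⁅chiG1 G, chiL G⁆, chiG2 G⁆ from rfl, show chiL1 G = ⁅chiL G, chiG1 G⁆ from rfl, commutator_comm (chiG1 G) (chiL G)]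

lemma R_normal : (chiR G).Normal := by
  have hL1 := L1_normal (G := G)
  have h2 : ∀ c : G, ∀ n ∈ chiR G, chiIota2 G c * n * (chiIota2 G c)⁻¹ ∈ chiR G := by
    intro c n hn
    rw [R_eq] at hn ⊢
    have hn' := mem_comm_iff.mp hn
    refine mem_comm_iff.mpr (conj_mem_of_gens _ (chiIota2 G c) ?_ n hn')
    rintro s ⟨x, hx, q, hq, rfl⟩
    rw [conjC]
    exact subset_closure ⟨_, hL1.conj_mem x hx _, _,
      mul_mem (mul_mem (i2_mem c) hq) (inv_mem (i2_mem c)), rfl⟩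
  apply normal_of_conj_self
  · intro c n hn
    rw [iota1_eq]
    have heq : chiIota2 G c * (lel c)⁻¹ * n * (chiIota2 G c * (lel c)⁻¹)⁻¹ =
        chiIota2 G c * ((lel c)⁻¹ * n * lel c) * (chiIota2 G c)⁻¹ := by group
    rw [heq]
    have hcomm : (lel c)⁻¹ * n * lel c = n := by
      have h := (comm_R_L n hn (lel c) (lel_mem c)).eq
      rw [mul_assoc, h, inv_mul_cancel_left]
    rw [hcomm]
    exact h2 c n hn
  · exact h2

/-! ### `L₁₂ ≤ R` -/

lemma L12_le_R : chiL12 G ≤ chiR G := by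
  haveI := R_normal (G := G)
  set π := QuotientGroup.mk' (chiR G) with hπ
  have hRbot : map π (chiR G) = ⊥ := by
    rw [Subgroup.map_eq_bot_iff, hπ, QuotientGroup.ker_mk']
  have hDL : ⁅map π (chiD G), map π (chiL G)⁆ = ⊥ := by
    rw [← map_commutator, comm_DL_bot]
    exact map_bot π
  have step1 : ⁅⁅map π (chiL G), map π (chiG2 G)⁆, map π (chiG1 G)⁆ = ⊥ := by
    apply commutator_commutator_eq_bot_of_rotate
    · rw [commutator_comm (map π (chiG2 G)) (map π (chiG1 G))]
      rw [show (⁅map π (chiG1 G), map π (chiG2 G)⁆ : Subgroup _) = map π (chiD G) by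
        rw [show chiD G = ⁅chiG1 G, chiG2 G⁆ from rfl, map_commutator]]
      exact hDL
    · have hmr : map π (chiR G) =
          (⁅⁅map π (chiG1 G), map π (chiL G)⁆, map π (chiG2 G)⁆ : Subgroup _) := by
        have h := map_commutator (⁅chiG1 G, chiL G⁆) (chiG2 G) π
        rw [map_commutator (chiG1 G) (chiL G) π] at h
        exact h
      rw [← hmr]
      exact hRbot
  have step2 : ⁅⁅map π (chiL G), map π (chiG1 G)⁆, map π (chiL2 G)⁆ = ⊥ := by
    apply commutator_commutator_eq_bot_of_rotate
    · rw [commutator_comm (map π (chiG1 G)) (map π (chiL2 G))]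
      rw [show (map π (chiL2 G)) = ⁅map π (chiL G), map π (chiG2 G)⁆ by
        rw [show chiL2 G = ⁅chiL G, chiG2 G⁆ from rfl, map_commutator], step1, commutator_bot_left]
    · haveI : (map π (chiL2 G)).Normal := (L2_normal (G := G)).map π
        (QuotientGroup.mk'_surjective _)
      rw [eq_bot_iff]
      calc ⁅⁅map π (chiL2 G), map π (chiL G)⁆, map π (chiG1 G)⁆
          ≤ ⁅map π (chiL2 G), map π (chiG1 G)⁆ :=
            commutator_mono (commutator_le_left _ _) le_rfl
        _ = ⁅⁅map π (chiL G), map π (chiG2 G)⁆, map π (chiG1 G)⁆ := by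
            rw [show chiL2 G = ⁅chiL G, chiG2 G⁆ from rfl, map_commutator]
        _ = ⊥ := step1
        _ ≤ ⊥ := le_rfl
  have hfin : map π (chiL12 G) = ⊥ := by
    rw [show chiL12 G = ⁅chiL1 G, chiL2 G⁆ from rfl, map_commutator]
    rw [show (map π (chiL1 G)) = ⁅map π (chiL G), map π (chiG1 G)⁆ by
      rw [show chiL1 G = ⁅chiL G, chiG1 G⁆ from rfl, map_commutator]]
    exact step2
  rw [Subgroup.map_eq_bot_iff, hπ, QuotientGroup.ker_mk'] at hfin
  exact hfin

/-! ### `⁅⁅L₁, L⁆, G₂⁆ ≤ L₁₂` -/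

lemma A_le_L12 : ⁅⁅chiL1 G, chiL G⁆, chiG2 G⁆ ≤ chiL12 G := by
  haveI := L12_normal (G := G)
  set ρ := QuotientGroup.mk' (chiL12 G) with hρ
  have hbot : map ρ (chiL12 G) = ⊥ := by
    rw [Subgroup.map_eq_bot_iff, hρ, QuotientGroup.ker_mk']
  have key : ⁅⁅map ρ (chiL1 G), map ρ (chiL G)⁆, map ρ (chiG2 G)⁆ = ⊥ := by
    apply commutator_commutator_eq_bot_of_rotate
    · rw [show (⁅map ρ (chiL G), map ρ (chiG2 G)⁆ : Subgroup _) = map ρ (chiL2 G) by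
        rw [show chiL2 G = ⁅chiL G, chiG2 G⁆ from rfl, map_commutator]]
      have : (⁅map ρ (chiL2 G), map ρ (chiL1 G)⁆ : Subgroup _) = map ρ (chiL12 G) :=
        (commutator_comm _ _).trans (map_commutator _ _ _).symm
      rw [this]
      exact hbot
    · rw [commutator_comm (map ρ (chiG2 G)) (map ρ (chiL1 G))]
      rw [show (⁅map ρ (chiL1 G), map ρ (chiG2 G)⁆ : Subgroup _) = map ρ (chiR G) by
        rw [R_eq, map_commutator]]
      rw [← map_commutator, comm_RL_bot]
      exact map_bot ρ
  have hfin : map ρ ⁅⁅chiL1 G, chiL G⁆, chiG2 G⁆ = ⊥ := by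
    rw [map_commutator, map_commutator]
    exact key
  rw [Subgroup.map_eq_bot_iff, hρ, QuotientGroup.ker_mk'] at hfin
  exact hfin

/-! ### The main generation argument -/

variable (G) in
def NN : Subgroup (Chi G) := chiL12 G ⊔ Subgroup.closure
  {x : Chi G | ∃ g a b : G,
    x = ⁅⁅(chiIota1 G g)⁻¹ * chiIota2 G g, chiIota1 G a⁆, chiIota2 G b⁆}

lemma L12_le_NN : chiL12 G ≤ NN G := le_sup_left

lemma TT_mem_NN (g a b : G) :
    ⁅⁅(chiIota1 G g)⁻¹ * chiIota2 G g, chiIota1 G a⁆, chiIota2 G b⁆ ∈ NN G :=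
  le_sup_right (α := Subgroup (Chi G)) (subset_closure ⟨g, a, b, rfl⟩)

lemma L1_le_L : chiL1 G ≤ chiL G := by
  haveI := L_normal (G := G)
  exact commutator_le_left _ _

lemma AA_le_L1 : ⁅chiL1 G, chiL G⁆ ≤ chiL1 G := by
  haveI := L1_normal (G := G)
  exact commutator_le_left _ _

lemma AA_le_L : ⁅chiL1 G, chiL G⁆ ≤ chiL G := by
  haveI := L_normal (G := G)
  exact commutator_le_right _ _

lemma AA_mem {w x : Chi G} (hw : w ∈ chiL G) (hx : x ∈ chiL1 G) :
    ⁅w, x⁆ ∈ ⁅chiL1 G, chiL G⁆ := by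
  rw [commutator_comm]
  exact commutator_mem_commutator hw hx

lemma mem_R_of {x : Chi G} (hx : x ∈ chiL1 G) (b : G) :
    ⁅x, chiIota2 G b⁆ ∈ chiR G := by
  rw [R_eq]
  exact commutator_mem_commutator hx (i2_mem b)

lemma comm_one_R_L {r w : Chi G} (hr : r ∈ chiR G) (hw : w ∈ chiL G) :
    ⁅w, r⁆ = 1 :=
  commutatorElement_eq_one_iff_commute.mpr (comm_R_L r hr w hw).symm

lemma main0 : ∀ w ∈ chiL G, ∀ a b : G,
    ⁅⁅w, chiIota1 G a⁆, chiIota2 G b⁆ ∈ NN G := by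
  intro w hw
  have hw' : w ∈ closure {x : Chi G | ∃ g : G, x = (chiIota1 G g)⁻¹ * chiIota2 G g} := hw
  clear hw
  induction hw' using closure_induction with
  | mem s hs =>
    obtain ⟨g, rfl⟩ := hs
    intro a b
    exact TT_mem_NN g a b
  | one =>
    intro a b
    rw [commutatorElement_one_left, commutatorElement_one_left]
    exact one_mem _
  | mul w₁ w₂ hw₁ hw₂ ih₁ ih₂ =>
    intro a b
    have hw₁L : w₁ ∈ chiL G := hw₁
    have hw₂L : w₂ ∈ chiL G := hw₂
    have hu₁ : ⁅w₁, chiIota1 G a⁆ ∈ chiL1 G :=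
      commutator_mem_commutator hw₁L (i1_mem a)
    have hu₂ : ⁅w₂, chiIota1 G a⁆ ∈ chiL1 G :=
      commutator_mem_commutator hw₂L (i1_mem a)
    have hk : ⁅w₁, ⁅w₂, chiIota1 G a⁆⁆ ∈ ⁅chiL1 G, chiL G⁆ := AA_mem hw₁L hu₂
    rw [c_mul w₁ w₂ (chiIota1 G a)]
    rw [c_mul _ ⁅w₁, chiIota1 G a⁆ (chiIota2 G b)]
    rw [c_mul ⁅w₁, ⁅w₂, chiIota1 G a⁆⁆ ⁅w₂, chiIota1 G a⁆ (chiIota2 G b)]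
    have h1 : ⁅⁅w₁, ⁅w₂, chiIota1 G a⁆⁆, ⁅⁅w₂, chiIota1 G a⁆, chiIota2 G b⁆⁆ = 1 :=
      comm_one_R_L (mem_R_of hu₂ b) (AA_le_L hk)
    have h2 : ⁅⁅w₁, ⁅w₂, chiIota1 G a⁆⁆ * ⁅w₂, chiIota1 G a⁆,
        ⁅⁅w₁, chiIota1 G a⁆, chiIota2 G b⁆⁆ = 1 :=
      comm_one_R_L (mem_R_of hu₁ b)
        (mul_mem (AA_le_L hk) (L1_le_L hu₂))
    rw [h1, h2, one_mul, one_mul]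
    have h3 : ⁅⁅w₁, ⁅w₂, chiIota1 G a⁆⁆, chiIota2 G b⁆ ∈ NN G :=
      L12_le_NN (A_le_L12 (commutator_mem_commutator hk (i2_mem b)))
    exact mul_mem (ih₁ a b) (mul_mem (ih₂ a b) h3)
  | inv w hwm ih =>
    intro a b
    have hwL : w ∈ chiL G := hwm
    have hm : ⁅w, chiIota1 G a⁆ ∈ chiL1 G := commutator_mem_commutator hwL (i1_mem a)
    have hk : ⁅w⁻¹, ⁅w, chiIota1 G a⁆⁻¹⁆ ∈ ⁅chiL1 G, chiL G⁆ :=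
      AA_mem (inv_mem hwL) (inv_mem hm)
    rw [c_inv w (chiIota1 G a)]
    rw [c_mul ⁅w⁻¹, ⁅w, chiIota1 G a⁆⁻¹⁆ ⁅w, chiIota1 G a⁆⁻¹ (chiIota2 G b)]
    have h1 : ⁅⁅w⁻¹, ⁅w, chiIota1 G a⁆⁻¹⁆, ⁅⁅w, chiIota1 G a⁆⁻¹, chiIota2 G b⁆⁆ = 1 :=
      comm_one_R_L (mem_R_of (inv_mem hm) b) (AA_le_L hk)
    rw [h1, one_mul]
    have h2 : ⁅⁅w, chiIota1 G a⁆⁻¹, chiIota2 G b⁆ ∈ NN G := by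
      rw [c_inv ⁅w, chiIota1 G a⁆ (chiIota2 G b)]
      have h3 : ⁅⁅w, chiIota1 G a⁆⁻¹, ⁅⁅w, chiIota1 G a⁆, chiIota2 G b⁆⁻¹⁆ = 1 := by
        have hc : Commute ⁅⁅w, chiIota1 G a⁆, chiIota2 G b⁆ ⁅w, chiIota1 G a⁆ :=
          comm_R_L _ (mem_R_of hm b) _ (L1_le_L hm)
        exact commutatorElement_eq_one_iff_commute.mpr hc.symm.inv_left.inv_right
      rw [h3, one_mul]
      exact inv_mem (ih a b)
    have h4 : ⁅⁅w⁻¹, ⁅w, chiIota1 G a⁆⁻¹⁆, chiIota2 G b⁆ ∈ NN G :=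
      L12_le_NN (A_le_L12 (commutator_mem_commutator hk (i2_mem b)))
    exact mul_mem h2 h4

lemma main1 : ∀ x ∈ chiL1 G, ∀ b : G, ⁅x, chiIota2 G b⁆ ∈ NN G := by
  intro x hx
  have hx' : x ∈ closure {g : Chi G | ∃ g₁ ∈ chiL G, ∃ g₂ ∈ chiG1 G, ⁅g₁, g₂⁆ = g} :=
    mem_comm_iff.mp hx
  clear hx
  induction hx' using closure_induction with
  | mem s hs =>
    obtain ⟨w, hw, p, ⟨a, rfl⟩, rfl⟩ := hs
    intro b
    exact main0 w hw a b
  | one =>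
    intro b
    rw [commutatorElement_one_left]
    exact one_mem _
  | mul x y hxm hym ihx ihy =>
    intro b
    have hxL1 : x ∈ chiL1 G := mem_comm_iff.mpr hxm
    have hyL1 : y ∈ chiL1 G := mem_comm_iff.mpr hym
    rw [c_mul x y (chiIota2 G b)]
    have h1 : ⁅x, ⁅y, chiIota2 G b⁆⁆ = 1 :=
      comm_one_R_L (mem_R_of hyL1 b) (L1_le_L hxL1)
    rw [h1, one_mul]
    exact mul_mem (ihy b) (ihx b)
  | inv x hxm ih =>
    intro b
    have hxL1 : x ∈ chiL1 G := mem_comm_iff.mpr hxm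
    rw [c_inv x (chiIota2 G b)]
    have h3 : ⁅x⁻¹, ⁅x, chiIota2 G b⁆⁻¹⁆ = 1 := by
      have hc : Commute ⁅x, chiIota2 G b⁆ x := comm_R_L _ (mem_R_of hxL1 b) _ (L1_le_L hxL1)
      exact commutatorElement_eq_one_iff_commute.mpr hc.symm.inv_left.inv_right
    rw [h3, one_mul]
    exact inv_mem (ih b)

lemma R_le_NN : chiR G ≤ NN G := by
  rw [R_eq, commutator_le]
  rintro x hx y ⟨b, rfl⟩
  exact main1 x hx b

lemma T_le_R : Subgroup.closure
    {x : Chi G | ∃ g a b : G,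
      x = ⁅⁅(chiIota1 G g)⁻¹ * chiIota2 G g, chiIota1 G a⁆, chiIota2 G b⁆} ≤ chiR G := by
  rw [closure_le]
  rintro t ⟨g, a, b, rfl⟩
  have h1 : ⁅(chiIota1 G g)⁻¹ * chiIota2 G g, chiIota1 G a⁆ ∈ ⁅chiG1 G, chiL G⁆ := by
    rw [commutator_comm]
    exact commutator_mem_commutator (lel_mem g) (i1_mem a)
  exact commutator_mem_commutator h1 (i2_mem b)

end ChiProofAux

theorem chiR_eq_join (G : Type*) [Group G] :
    chiR G = chiL12 G ⊔ Subgroup.closure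
      {x : Chi G | ∃ g a b : G,
        x = ⁅⁅(chiIota1 G g)⁻¹ * chiIota2 G g, chiIota1 G a⁆, chiIota2 G b⁆} := by
  apply le_antisymm
  · exact ChiProofAux.R_le_NN
  · exact sup_le ChiProofAux.L12_le_R ChiProofAux.T_le_R
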